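/- Let G be a t.d.l.c. group. Then G has rational discrete cohomological dimension 0 (i.e., the trivial module Q is projective in the category of discrete Q[G]-modules) if and only if G is compact. -/

import Mathlib

universe u

/-- A discrete `ℚ[G]`-module over a topological group `G`: a `ℚ`-vector space with
a `ℚ`-linear `G`-action in which every element has open stabilizer. -/
structure DiscGMod (G : Type u) [Group G] [TopologicalSpace G] : Type (u + 1) where
  carrier : Type u
  [acg : AddCommGroup carrier]
  [mod : Module ℚ carrier]
  [act : DistribMulAction G carrier]
  [cmm : SMulCommClass G ℚ carrier]
  discrete : ∀ m : carrier, IsOpen ((MulAction.stabilizer G m : Subgroup G) : Set G)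

attribute [instance] DiscGMod.acg DiscGMod.mod DiscGMod.act DiscGMod.cmm

/-- A morphism of discrete `ℚ[G]`-modules is a `G`-equivariant `ℚ`-linear map. -/
def DiscGMod.Equivariant {G : Type u} [Group G] [TopologicalSpace G]
    {A B : DiscGMod G} (f : A.carrier →ₗ[ℚ] B.carrier) : Prop :=
  ∀ (g : G) (a : A.carrier), f (g • a) = g • f a

/-- Projectivity, relative to the category of discrete `ℚ[G]`-modules, of a
`ℚ`-module `P` equipped with a `G`-action `σ`: every equivariant map from `P` to a
discrete module lifts along every equivariant surjection of discrete modules. -/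
def ProjOverDiscrete (G : Type u) [Group G] [TopologicalSpace G]
    (P : Type u) [AddCommGroup P] [Module ℚ P] (σ : G → P → P) : Prop :=
  ∀ (A B : DiscGMod G) (π : B.carrier →ₗ[ℚ] A.carrier),
    DiscGMod.Equivariant π → Function.Surjective π →
    ∀ φ : P →ₗ[ℚ] A.carrier, (∀ (g : G) (x : P), φ (σ g x) = g • φ x) →
    ∃ ψ : P →ₗ[ℚ] B.carrier, (∀ (g : G) (x : P), ψ (σ g x) = g • ψ x) ∧ π.comp ψ = φ

/- ### Auxiliary material -/

open Set Filter Topology Pointwise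

attribute [local instance] Finsupp.comapSMul Finsupp.comapMulAction Finsupp.comapDistribMulAction

namespace DCohAux

variable {G : Type u} [Group G] [TopologicalSpace G] [IsTopologicalGroup G]

theorem myT2 [TotallyDisconnectedSpace G] : T2Space G := by
  refine IsTopologicalGroup.t2Space_iff_one_closed.mpr ?_
  have h : connectedComponent (1 : G) = {1} :=
    totallyDisconnectedSpace_iff_connectedComponent_singleton.mp ‹_› 1
  exact h ▸ isClosed_connectedComponent

theorem exists_mul_closure_nhd' {W : Set G} (Wcomp : IsCompact W) (Wopen : IsOpen W) :
    ∃ T ∈ 𝓝 (1 : G), W * T ⊆ W := by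
  apply Wcomp.induction_on (p := fun S ↦ ∃ T ∈ 𝓝 (1 : G), S * T ⊆ W)
    ⟨Set.univ, by simp only [univ_mem, empty_mul, empty_subset, and_self]⟩
    (fun _ _ huv ⟨T, hT, mem⟩ ↦ ⟨T, hT, (mul_subset_mul_right huv).trans mem⟩)
    fun U V ⟨T₁, hT₁, mem1⟩ ⟨T₂, hT₂, mem2⟩ ↦ ⟨T₁ ∩ T₂, inter_mem hT₁ hT₂, by
      rw [union_mul]
      exact union_subset (mul_subset_mul_left inter_subset_left |>.trans mem1)
        (mul_subset_mul_left inter_subset_right |>.trans mem2)⟩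
  intro x memW
  have : (x, 1) ∈ (fun p : G × G ↦ p.1 * p.2) ⁻¹' W := by simp [memW]
  rcases isOpen_prod_iff.mp (continuous_mul.isOpen_preimage W Wopen) x 1 this with
    ⟨U, V, Uopen, Vopen, xmemU, onememV, prodsub⟩
  have h6 : U * V ⊆ W := mul_subset_iff.mpr (fun _ hx _ hy ↦ prodsub (mk_mem_prod hx hy))
  exact ⟨U ∩ W, ⟨U, Uopen.mem_nhds xmemU, W, fun _ a ↦ a, rfl⟩,
    V, IsOpen.mem_nhds Vopen onememV, fun _ a ↦ h6 ((mul_subset_mul_right inter_subset_left) a)⟩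

/-- **van Dantzig's theorem**: a t.d.l.c. group has a compact open subgroup. -/
theorem exists_compact_openSubgroup [TotallyDisconnectedSpace G] [LocallyCompactSpace G] :
    ∃ O : OpenSubgroup G, IsCompact (O : Set G) := by
  haveI : T2Space G := myT2
  obtain ⟨K, hKc, hK⟩ := exists_compact_mem_nhds (1 : G)
  obtain ⟨W, hWclopen, h1W, hWK⟩ :=
    loc_compact_Haus_tot_disc_of_zero_dim.mem_nhds_iff.mp hK
  have Wcomp : IsCompact W := hKc.of_isClosed_subset hWclopen.isClosed hWK
  obtain ⟨S, Smem, Smul⟩ := exists_mul_closure_nhd' Wcomp hWclopen.isOpen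
  rcases mem_nhds_iff.mp Smem with ⟨U, UsubS, Uopen, onememU⟩
  set V : Set G := U ∩ U⁻¹ with hVdef
  have hVnhd : V ∈ 𝓝 (1 : G) := by
    simp [hVdef, Uopen.mem_nhds onememU, inv_mem_nhds_one]
  have hVinv : V⁻¹ = V := by simp [hVdef, inter_comm]
  have hVmul : W * V ⊆ W := fun a ha ↦ Smul (mul_subset_mul_left UsubS
    (mul_subset_mul_left inter_subset_left ha))
  let H : Subgroup G := {
    carrier := ⋃ n, V ^ (n + 1)
    mul_mem' := fun ha hb ↦ by
      rcases mem_iUnion.mp ha with ⟨k, hk⟩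
      rcases mem_iUnion.mp hb with ⟨l, hl⟩
      apply mem_iUnion.mpr
      exact ⟨k + 1 + l, by rw [add_assoc, pow_add]; exact Set.mul_mem_mul hk hl⟩
    one_mem' := by
      apply mem_iUnion.mpr
      exact ⟨0, by simp [mem_of_mem_nhds hVnhd]⟩
    inv_mem' := fun ha ↦ by
      rcases mem_iUnion.mp ha with ⟨k, hk⟩
      apply mem_iUnion.mpr
      refine ⟨k, ?_⟩
      rw [← hVinv]
      simpa only [inv_pow, Set.mem_inv, inv_inv] using hk }
  have Hopen : IsOpen (H : Set G) := by
    refine isOpen_iUnion (fun n ↦ ?_)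
    rw [pow_succ]
    exact (Uopen.inter Uopen.inv).mul_left
  have mulVpow : ∀ n : ℕ, W * V ^ (n + 1) ⊆ W := by
    intro n
    induction' n with n ih
    · simpa using hVmul
    · rw [pow_succ, ← mul_assoc]
      exact (Set.mul_subset_mul_right ih).trans hVmul
  have hsub : (H : Set G) ⊆ W := by
    refine iUnion_subset fun n x hx ↦ mulVpow n ?_
    rw [Set.mem_mul]
    exact ⟨1, h1W, x, hx, one_mul x⟩
  exact ⟨⟨H, Hopen⟩, Wcomp.of_isClosed_subset (Subgroup.isClosed_of_isOpen H Hopen) hsub⟩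

theorem stab_quot_open (O : OpenSubgroup G) (x : G ⧸ O.toSubgroup) :
    IsOpen ((MulAction.stabilizer G x : Subgroup G) : Set G) := by
  induction x using QuotientGroup.induction_on with
  | H g =>
    apply Subgroup.isOpen_of_mem_nhds (g := 1)
    rw [mem_nhds_iff]
    refine ⟨(fun h => g⁻¹ * h⁻¹ * g) ⁻¹' (O : Set G), ?_, ?_, ?_⟩
    · intro h hh
      simp only [Set.mem_preimage, SetLike.mem_coe] at hh
      show h • (QuotientGroup.mk g : G ⧸ O.toSubgroup) = QuotientGroup.mk g
      rw [show h • (QuotientGroup.mk g : G ⧸ O.toSubgroup) = QuotientGroup.mk (h * g) from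
        MulAction.Quotient.smul_mk O.toSubgroup h g, QuotientGroup.eq]
      simpa [mul_assoc, mul_inv_rev] using hh
    · exact O.isOpen.preimage (by continuity)
    · simpa [Set.mem_preimage] using O.one_mem

theorem stab_finsupp_open (O : OpenSubgroup G) (m : (G ⧸ O.toSubgroup) →₀ ℚ) :
    IsOpen ((MulAction.stabilizer G m : Subgroup G) : Set G) := by
  apply Subgroup.isOpen_of_mem_nhds (g := 1)
  have hsub : ((⨅ a ∈ m.support, MulAction.stabilizer G a : Subgroup G) : Set G) ⊆
      (MulAction.stabilizer G m : Set G) := by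
    intro g hg
    simp only [SetLike.mem_coe, Subgroup.mem_iInf] at hg
    have hfix : ∀ a ∈ m.support, g • a = a := fun a ha => hg a ha
    show g • m = m
    ext x
    rw [Finsupp.comapSMul_apply]
    by_cases hx : g⁻¹ • x ∈ m.support
    · have : g • (g⁻¹ • x) = g⁻¹ • x := hfix _ hx
      have hxx : g⁻¹ • x = x := by
        conv_rhs => rw [← smul_inv_smul g x]
        rw [this]
      rw [hxx]
    · rw [Finsupp.notMem_support_iff.mp hx]
      by_contra hne
      have hxs : x ∈ m.support := Finsupp.mem_support_iff.mpr (Ne.symm hne)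
      exact hx (by rw [← hfix x hxs, inv_smul_smul]; exact hxs)
  have hopen : IsOpen ((⨅ a ∈ m.support, MulAction.stabilizer G a : Subgroup G) : Set G) := by
    have : ((⨅ a ∈ m.support, MulAction.stabilizer G a : Subgroup G) : Set G) =
        ⋂ a ∈ m.support, (MulAction.stabilizer G a : Set G) := by
      simp [Subgroup.coe_iInf]
    rw [this]
    exact isOpen_biInter_finset (fun a _ => stab_quot_open O a)
  exact Filter.mem_of_superset (hopen.mem_nhds (by simp [Subgroup.one_mem])) hsub

/-- The trivial `G`-action on `ULift ℚ`. -/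
def trivAct (G : Type u) [Group G] : DistribMulAction G (ULift.{u} ℚ) where
  smul _ x := x
  one_smul _ := rfl
  mul_smul _ _ _ := rfl
  smul_zero _ := rfl
  smul_add _ _ _ := rfl

end DCohAux

open DCohAux in
/-- A t.d.l.c. group `G` has rational discrete cohomological
dimension `0` — i.e. the trivial discrete `ℚ[G]`-module `ℚ` is projective in the
category of discrete `ℚ[G]`-modules — if and only if `G` is compact. -/
theorem trivial_module_projective_iff_compact (G : Type u) [Group G]
    [TopologicalSpace G] [IsTopologicalGroup G] [TotallyDisconnectedSpace G]
    [LocallyCompactSpace G] :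
    ProjOverDiscrete G (ULift.{u} ℚ) (fun _ q => q) ↔ CompactSpace G := by
  constructor
  · -- projective → compact
    intro hproj
    obtain ⟨O, hOcomp⟩ := exists_compact_openSubgroup (G := G)
    -- the trivial discrete module `ULift ℚ`
    letI actA : DistribMulAction G (ULift.{u} ℚ) := trivAct G
    haveI cmmA : SMulCommClass G ℚ (ULift.{u} ℚ) := ⟨fun _ _ _ => rfl⟩
    let A : DiscGMod G := ⟨ULift.{u} ℚ, fun m => by
      have : ((MulAction.stabilizer G m : Subgroup G) : Set G) = Set.univ :=
        Set.eq_univ_of_forall (fun g => show g • m = m from rfl)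
      rw [this]; exact isOpen_univ⟩
    -- the discrete module `ℚ[G/O]`
    haveI cmmB : SMulCommClass G ℚ ((G ⧸ O.toSubgroup) →₀ ℚ) := by
      constructor
      intro g c f
      ext x
      simp [Finsupp.comapSMul_apply, Finsupp.smul_apply]
    let B : DiscGMod G := ⟨(G ⧸ O.toSubgroup) →₀ ℚ, stab_finsupp_open O⟩
    -- the augmentation map
    let π₀ : ((G ⧸ O.toSubgroup) →₀ ℚ) →ₗ[ℚ] ℚ :=
      Finsupp.lsum ℚ (fun _ => (LinearMap.id : ℚ →ₗ[ℚ] ℚ))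
    let π : B.carrier →ₗ[ℚ] A.carrier :=
      (ULift.moduleEquiv.symm.toLinearMap).comp π₀
    have hπ₀ : ∀ f : (G ⧸ O.toSubgroup) →₀ ℚ, π₀ f = f.sum fun _ q => q := by
      intro f; simp [π₀, Finsupp.lsum_apply, Finsupp.sum]
    have hπeq : DiscGMod.Equivariant π := by
      intro g f
      show ULift.up (π₀ (g • f)) = g • ULift.up (π₀ f)
      have : π₀ (g • f) = π₀ f := by
        rw [hπ₀, hπ₀, Finsupp.comapSMul_def]
        exact Finsupp.sum_mapDomain_index (fun _ => rfl) (fun _ _ _ => rfl)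
      rw [this]
      rfl
    have hπsurj : Function.Surjective π := by
      intro a
      refine ⟨Finsupp.single (QuotientGroup.mk 1) a.down, ?_⟩
      show ULift.up (π₀ _) = a
      rw [hπ₀, Finsupp.sum_single_index rfl]
    obtain ⟨ψ, hψeq, hψcomp⟩ := hproj A B π hπeq hπsurj LinearMap.id (fun _ _ => rfl)
    set f : (G ⧸ O.toSubgroup) →₀ ℚ := ψ (ULift.up 1) with hf
    have hinv : ∀ g : G, g • f = f := fun g => (hψeq g (ULift.up 1)).symm
    have hsum : f.sum (fun _ q => q) = 1 := by
      have := congrArg (fun m => (m (ULift.up (1:ℚ))).down) hψcomp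
      rw [← hπ₀]; exact this
    have hconst : ∀ x y : G ⧸ O.toSubgroup, f x = f y := by
      intro x y
      obtain ⟨g, hg⟩ : ∃ g : G, g • y = x := by
        induction x using QuotientGroup.induction_on with
        | H a =>
          induction y using QuotientGroup.induction_on with
          | H b =>
            exact ⟨a * b⁻¹, by
              rw [MulAction.Quotient.smul_mk]
              congr 1
              rw [smul_eq_mul, inv_mul_cancel_right]⟩
      have h2 := Finsupp.comapSMul_apply g f (g • y)
      rw [hinv g, inv_smul_smul] at h2
      rw [← hg]; exact h2
    -- `f` is a nonzero constant, so the quotient is finite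
    have hne : f (QuotientGroup.mk 1) ≠ 0 := by
      intro h0
      have : f = 0 := Finsupp.ext fun x => by rw [hconst x (QuotientGroup.mk 1), h0]; rfl
      rw [this] at hsum
      simp at hsum
    haveI hfin : Finite (G ⧸ O.toSubgroup) := by
      refine Set.finite_univ_iff.mp (Set.Finite.subset f.support.finite_toSet ?_)
      intro x _
      exact Finsupp.mem_support_iff.mpr (by rw [hconst x (QuotientGroup.mk 1)]; exact hne)
    -- finitely many compact cosets cover `G`
    refine ⟨?_⟩
    have hcover : (Set.univ : Set G) ⊆
        ⋃ q : G ⧸ O.toSubgroup, Quotient.out q • (O : Set G) := by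
      intro g _
      refine Set.mem_iUnion.mpr ⟨QuotientGroup.mk g, ?_⟩
      rw [Set.mem_smul_set_iff_inv_smul_mem]
      have houte : (QuotientGroup.mk (Quotient.out (QuotientGroup.mk g : G ⧸ O.toSubgroup))
          : G ⧸ O.toSubgroup) = QuotientGroup.mk g := QuotientGroup.out_eq' _
      simpa using QuotientGroup.eq.mp houte
    rw [show (Set.univ : Set G) = ⋃ q : G ⧸ O.toSubgroup, Quotient.out q • (O : Set G) from
      le_antisymm hcover (Set.subset_univ _)]
    exact isCompact_iUnion (fun q => hOcomp.smul _)
  · -- compact → projective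
    intro hc
    haveI : CompactSpace G := hc
    intro A B π hπeq hπsurj φ hφeq
    set a : A.carrier := φ (ULift.up 1) with ha
    have hainv : ∀ g : G, g • a = a := fun g => (hφeq g (ULift.up 1)).symm
    obtain ⟨b, hb⟩ := hπsurj a
    -- the orbit of b is finite
    haveI : Finite (G ⧸ MulAction.stabilizer G b) :=
      Subgroup.quotient_finite_of_isOpen _ (B.discrete b)
    haveI : Finite (MulAction.orbit G b) :=
      Finite.of_equiv _ (MulAction.orbitEquivQuotientStabilizer G b).symm
    obtain ⟨c, hcinv, hπc⟩ : ∃ c : B.carrier, (∀ g : G, g • c = c) ∧ π c = a := by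
      set s : Finset B.carrier := (Set.toFinite (MulAction.orbit G b)).toFinset with hs
      have hmem : ∀ x, x ∈ s ↔ x ∈ MulAction.orbit G b := by
        intro x; simp [hs]
      have hsmul_mem : ∀ (g : G) (x : B.carrier), x ∈ MulAction.orbit G b →
          g • x ∈ MulAction.orbit G b := by
        rintro g x ⟨h, rfl⟩
        exact ⟨g * h, mul_smul g h b⟩
      set T : B.carrier := ∑ x ∈ s, x with hT
      have hTinv : ∀ g : G, g • T = T := by
        intro g
        rw [hT, Finset.smul_sum]
        have hmap : s.map ⟨fun x => g • x, MulAction.injective g⟩ = s := by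
          ext y
          simp only [Finset.mem_map, Function.Embedding.coeFn_mk]
          constructor
          · rintro ⟨x, hx, rfl⟩
            exact (hmem _).mpr (hsmul_mem g x ((hmem _).mp hx))
          · intro hy
            refine ⟨g⁻¹ • y, ?_, smul_inv_smul g y⟩
            exact (hmem _).mpr (hsmul_mem g⁻¹ y ((hmem _).mp hy))
        calc ∑ x ∈ s, g • x = ∑ y ∈ s.map ⟨fun x => g • x, MulAction.injective g⟩, y := by
              rw [Finset.sum_map]; rfl
          _ = T := by rw [hmap]
      have hcard : (s.card : ℚ) ≠ 0 := by
        have hbs : b ∈ s := (hmem b).mpr (MulAction.mem_orbit_self b)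
        have hpos : 0 < s.card := Finset.card_pos.mpr ⟨b, hbs⟩
        exact_mod_cast hpos.ne'
      refine ⟨(s.card : ℚ)⁻¹ • T, fun g => ?_, ?_⟩
      · rw [smul_comm, hTinv]
      · have hπT : π T = (s.card : ℚ) • a := by
          rw [hT, map_sum]
          have hx : ∀ x ∈ s, π x = a := by
            intro x hx
            obtain ⟨h, rfl⟩ := (hmem x).mp hx
            rw [hπeq, hb, hainv]
          rw [Finset.sum_congr rfl hx, Finset.sum_const, ← Nat.cast_smul_eq_nsmul ℚ]
        rw [map_smul, hπT, smul_smul, inv_mul_cancel₀ hcard, one_smul]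
    -- define the lift
    refine ⟨(LinearMap.toSpanSingleton ℚ B.carrier c).comp ULift.moduleEquiv.toLinearMap,
      ?_, ?_⟩
    · intro g x
      show x.down • c = g • (x.down • c)
      rw [smul_comm, hcinv]
    · apply LinearMap.ext
      intro x
      show π (x.down • c) = φ x
      rw [map_smul, hπc, ha, ← map_smul]
      congr 1
      ext
      simp [ULift.smul_def]
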